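/- Suppose α₀ = α₁ = γ₀ = γ₁ = 0. Then the number of pairs (x₁, x₂) ∈ 𝔽_q × 𝔽_q with (x₁, x₂) ≠ (0, 0) satisfying both A(x₁, x₂) = 0 and B(x₁, x₂) = 0 is either 0 or q−1. -/

import Mathlib

/-- odd characteristic: Suppose `α₀ = α₁ = γ₀ = γ₁ = 0`. Then the number of
pairs `(x₁, x₂) ∈ 𝔽_q × 𝔽_q` with `(x₁, x₂) ≠ (0, 0)` satisfying both `A(x₁, x₂) = 0` and
`B(x₁, x₂) = 0` is either `0` or `q − 1`, where
`A = (α₀ + β₀X₁ + sβ₁X₂ + γ₀(X₁² − sX₂²))(X₁² − sX₂²) + X₁(X₁² + 3sX₂²)` and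
`B = (α₁ + β₁X₁ + β₀X₂ + γ₁(X₁² − sX₂²))(X₁² − sX₂²) + X₂(3X₁² + sX₂²)`. -/
theorem stmt_15 (q : ℕ) (hq : IsPrimePow q) (hodd : Odd q)
    (F : Type*) [Field F] [Fintype F] [DecidableEq F] (hF : Fintype.card F = q)
    (s : F) (hs : ¬IsSquare s)
    (α₀ α₁ β₀ β₁ γ₀ γ₁ : F)
    (hα₀ : α₀ = 0) (hα₁ : α₁ = 0) (hγ₀ : γ₀ = 0) (hγ₁ : γ₁ = 0) :
    (Finset.univ.filter fun p : F × F => p ≠ (0, 0) ∧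
        (α₀ + β₀ * p.1 + s * β₁ * p.2 + γ₀ * (p.1 ^ 2 - s * p.2 ^ 2)) *
            (p.1 ^ 2 - s * p.2 ^ 2) + p.1 * (p.1 ^ 2 + 3 * s * p.2 ^ 2) = 0 ∧
        (α₁ + β₁ * p.1 + β₀ * p.2 + γ₁ * (p.1 ^ 2 - s * p.2 ^ 2)) *
            (p.1 ^ 2 - s * p.2 ^ 2) + p.2 * (3 * p.1 ^ 2 + s * p.2 ^ 2) = 0).card = 0 ∨
    (Finset.univ.filter fun p : F × F => p ≠ (0, 0) ∧
        (α₀ + β₀ * p.1 + s * β₁ * p.2 + γ₀ * (p.1 ^ 2 - s * p.2 ^ 2)) *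
            (p.1 ^ 2 - s * p.2 ^ 2) + p.1 * (p.1 ^ 2 + 3 * s * p.2 ^ 2) = 0 ∧
        (α₁ + β₁ * p.1 + β₀ * p.2 + γ₁ * (p.1 ^ 2 - s * p.2 ^ 2)) *
            (p.1 ^ 2 - s * p.2 ^ 2) + p.2 * (3 * p.1 ^ 2 + s * p.2 ^ 2) = 0).card = q - 1 := by
  subst hα₀ hα₁ hγ₀ hγ₁
  have h2 : (2 : F) ≠ 0 := by
    intro h2
    have hd : ringChar F ∣ 2 := ringChar.dvd (by exact_mod_cast h2)
    have hne0 : ringChar F ≠ 0 := CharP.char_ne_zero_of_finite F (ringChar F)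
    have hne1 : ringChar F ≠ 1 := CharP.ringChar_ne_one
    have hle : ringChar F ≤ 2 := Nat.le_of_dvd (by norm_num) hd
    have hch : ringChar F = 2 := by omega
    have heven : Fintype.card F % 2 = 0 := FiniteField.even_card_of_char_two hch
    rw [hF] at heven
    have := Nat.odd_iff.mp hodd
    omega
  have hs0 : s ≠ 0 := by
    intro h; exact hs ⟨0, by rw [h]; ring⟩
  have hu : ∀ a b : F, ¬(a = 0 ∧ b = 0) → a ^ 2 - s * b ^ 2 ≠ 0 := by
    intro a b hab h
    by_cases hb : b = 0
    · have ha : a = 0 := by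
        have : a ^ 2 = 0 := by rw [hb] at h; linear_combination h
        exact pow_eq_zero_iff (n := 2) (by norm_num) |>.mp this
      exact hab ⟨ha, hb⟩
    · exact hs ⟨a / b, by field_simp; linear_combination -h⟩
  set T := Finset.univ.filter (fun p : F × F => p ≠ (0, 0) ∧
        (0 + β₀ * p.1 + s * β₁ * p.2 + 0 * (p.1 ^ 2 - s * p.2 ^ 2)) *
            (p.1 ^ 2 - s * p.2 ^ 2) + p.1 * (p.1 ^ 2 + 3 * s * p.2 ^ 2) = 0 ∧
        (0 + β₁ * p.1 + β₀ * p.2 + 0 * (p.1 ^ 2 - s * p.2 ^ 2)) *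
            (p.1 ^ 2 - s * p.2 ^ 2) + p.2 * (3 * p.1 ^ 2 + s * p.2 ^ 2) = 0) with hT
  have hmem : ∀ a b : F, (a, b) ∈ T ↔ ¬(a = 0 ∧ b = 0) ∧
      (β₀ * a + s * β₁ * b) * (a ^ 2 - s * b ^ 2) + a * (a ^ 2 + 3 * s * b ^ 2) = 0 ∧
      (β₁ * a + β₀ * b) * (a ^ 2 - s * b ^ 2) + b * (3 * a ^ 2 + s * b ^ 2) = 0 := by
    intro a b
    simp only [hT, Finset.mem_filter, Finset.mem_univ, true_and, ne_eq, Prod.mk.injEq,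
      zero_add, zero_mul, add_zero, not_and]
  rcases Finset.eq_empty_or_nonempty T with hT0 | ⟨⟨x, y⟩, hp0⟩
  · left; rw [hT0]; rfl
  · right
    rw [hmem] at hp0
    obtain ⟨hxy0, hA, hB⟩ := hp0
    have hux : x ^ 2 - s * y ^ 2 ≠ 0 := hu x y hxy0
    -- Cramer: β₀ and β₁ determined
    have hb0 : β₀ * (x ^ 2 - s * y ^ 2) = -(x ^ 2 + s * y ^ 2) := by
      have h : (x ^ 2 - s * y ^ 2) * (β₀ * (x ^ 2 - s * y ^ 2) + (x ^ 2 + s * y ^ 2)) = 0 := by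
        linear_combination x * hA - s * y * hB
      have := (mul_eq_zero.mp h).resolve_left hux
      linear_combination this
    have hb1 : β₁ * (x ^ 2 - s * y ^ 2) = -(2 * x * y) := by
      have h : (x ^ 2 - s * y ^ 2) * (β₁ * (x ^ 2 - s * y ^ 2) + 2 * x * y) = 0 := by
        linear_combination x * hB - y * hA
      have := (mul_eq_zero.mp h).resolve_left hux
      linear_combination this
    -- show T equals the line through (x, y)
    have hTeq : T = (Finset.univ.erase (0 : F)).image (fun t => (t * x, t * y)) := by
      ext ⟨a, b⟩
      rw [hmem]
      simp only [Finset.mem_image, Finset.mem_erase, Finset.mem_univ, and_true, Prod.mk.injEq]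
      constructor
      · rintro ⟨hab0, hA', hB'⟩
        have hua : a ^ 2 - s * b ^ 2 ≠ 0 := hu a b hab0
        have hb0' : β₀ * (a ^ 2 - s * b ^ 2) = -(a ^ 2 + s * b ^ 2) := by
          have h : (a ^ 2 - s * b ^ 2) * (β₀ * (a ^ 2 - s * b ^ 2) + (a ^ 2 + s * b ^ 2)) = 0 := by
            linear_combination a * hA' - s * b * hB'
          have := (mul_eq_zero.mp h).resolve_left hua
          linear_combination this
        have hb1' : β₁ * (a ^ 2 - s * b ^ 2) = -(2 * a * b) := by
          have h : (a ^ 2 - s * b ^ 2) * (β₁ * (a ^ 2 - s * b ^ 2) + 2 * a * b) = 0 := by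
            linear_combination a * hB' - b * hA'
          have := (mul_eq_zero.mp h).resolve_left hua
          linear_combination this
        -- cross relations
        have h1 : (x ^ 2 + s * y ^ 2) * (a ^ 2 - s * b ^ 2)
            = (a ^ 2 + s * b ^ 2) * (x ^ 2 - s * y ^ 2) := by
          linear_combination (a ^ 2 - s * b ^ 2) * hb0 - (x ^ 2 - s * y ^ 2) * hb0'
        have h2' : (2 * x * y) * (a ^ 2 - s * b ^ 2)
            = (2 * a * b) * (x ^ 2 - s * y ^ 2) := by
          linear_combination (a ^ 2 - s * b ^ 2) * hb1 - (x ^ 2 - s * y ^ 2) * hb1'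
        have hfac : (y * a - x * b) * (y * a + x * b) = 0 := by
          have h : (2 * s) * ((y * a - x * b) * (y * a + x * b)) = 0 := by
            linear_combination h1
          exact (mul_eq_zero.mp h).resolve_left (mul_ne_zero h2 hs0)
        have hprop : x * b = y * a := by
          rcases mul_eq_zero.mp hfac with h | hanti
          · linear_combination -h
          · -- anti case
            have hkey : x * y * b ^ 2 = 0 := by
              have h4 : (2 : F) * 2 ≠ 0 := mul_ne_zero h2 h2
              have h : (2 * 2) * (x * y * b ^ 2 * (x ^ 2 - s * y ^ 2)) = 0 := by
                linear_combination y ^ 2 * h2' +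
                  (-(2 * x * y * (a * y - x * b)) + 2 * x ^ 2 * b * y - 2 * s * y ^ 3 * b) * hanti
              have := (mul_eq_zero.mp h).resolve_left h4
              exact (mul_eq_zero.mp this).resolve_right hux
            rcases mul_eq_zero.mp hkey with hxy | hb2
            · rcases mul_eq_zero.mp hxy with hx | hy
              · -- x = 0, so y ≠ 0, and y * a = 0 from hanti
                have hy : y ≠ 0 := fun h => hxy0 ⟨hx, h⟩
                have ha : a = 0 := by
                  have : y * a = 0 := by linear_combination hanti - b * hx
                  exact (mul_eq_zero.mp this).resolve_left hy
                rw [hx, ha]; ring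
              · have hx : x ≠ 0 := fun h => hxy0 ⟨h, hy⟩
                have hbz : b = 0 := by
                  have : x * b = 0 := by linear_combination hanti - a * hy
                  exact (mul_eq_zero.mp this).resolve_left hx
                rw [hy, hbz]; ring
            · have hbz : b = 0 := pow_eq_zero_iff (n := 2) (by norm_num) |>.mp hb2
              by_cases hy : y = 0
              · rw [hy, hbz]; ring
              · exfalso
                have ha : a = 0 := by
                  have : y * a = 0 := by linear_combination hanti - x * hbz
                  exact (mul_eq_zero.mp this).resolve_left hy
                exact hab0 ⟨ha, hbz⟩
        -- build t
        by_cases hx : x = 0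
        · have hy : y ≠ 0 := fun h => hxy0 ⟨hx, h⟩
          refine ⟨b / y, ?_, ?_, ?_⟩
          · intro ht
            have hbz : b = 0 := by
              field_simp at ht; simpa using ht
            have ha : a = 0 := by
              have : y * a = 0 := by linear_combination -hprop + b * hx
              exact (mul_eq_zero.mp this).resolve_left hy
            exact hab0 ⟨ha, hbz⟩
          · have : y * a = 0 := by linear_combination -hprop + b * hx
            have ha : a = 0 := (mul_eq_zero.mp this).resolve_left hy
            rw [ha, hx]; ring
          · field_simp
        · refine ⟨a / x, ?_, ?_, ?_⟩
          · intro ht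
            have ha : a = 0 := by
              field_simp at ht; simpa using ht
            have hbz : b = 0 := by
              have : x * b = 0 := by linear_combination hprop + y * ha
              exact (mul_eq_zero.mp this).resolve_left hx
            exact hab0 ⟨ha, hbz⟩
          · field_simp
          · field_simp
            linear_combination -hprop
      · rintro ⟨t, ht0, ha, hb⟩
        refine ⟨?_, ?_, ?_⟩
        · rintro ⟨ha0, hb0'⟩
          apply hxy0
          constructor
          · have : t * x = 0 := by rw [ha]; exact ha0
            exact (mul_eq_zero.mp this).resolve_left ht0
          · have : t * y = 0 := by rw [hb]; exact hb0'
            exact (mul_eq_zero.mp this).resolve_left ht0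
        · rw [← ha, ← hb]; linear_combination t ^ 3 * hA
        · rw [← ha, ← hb]; linear_combination t ^ 3 * hB
    rw [hTeq]
    rw [Finset.card_image_of_injOn]
    · rw [Finset.card_erase_of_mem (Finset.mem_univ 0), Finset.card_univ, hF]
    · intro t ht t' ht' hEq
      simp only [Prod.mk.injEq] at hEq
      obtain ⟨h1, h2'⟩ := hEq
      by_contra hne
      have hx0 : x = 0 := by
        have : (t - t') * x = 0 := by linear_combination h1
        exact (mul_eq_zero.mp this).resolve_left (sub_ne_zero_of_ne hne)
      have hy0 : y = 0 := by
        have : (t - t') * y = 0 := by linear_combination h2'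
        exact (mul_eq_zero.mp this).resolve_left (sub_ne_zero_of_ne hne)
      exact hxy0 ⟨hx0, hy0⟩
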